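/- Let A be a nonempty finite set, u : A → ℝ a function, and p* ∈ A a maximizer of u over A. Define Δ(q,p) = u(q) − u(p). Let Δ̂ : A × A → ℝ, and let r ≥ 0, c_rad ≥ 0, c_el > c_rad, and an integer m ≥ 0 satisfy: |Δ̂(q,p) − Δ(q,p)| ≤ r for all p, q ∈ A, and r ≤ c_rad·2^{−(m+1)}. Say p ∈ A is eliminated if there exists q ∈ A with Δ̂(q,p) > c_el·2^{−(m+1)}. Then p* is not eliminated, and every p ∈ A that is not eliminated satisfies u(p*) − u(p) ≤ (c_el + c_rad)·2^{−(m+1)}. -/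
import Mathlib


/-- **Safe elimination.**
If the gap estimator `Δ̂` is uniformly within `r ≤ c_rad·2^{-(m+1)}` of the true
gaps `Δ(q,p) = u(q) − u(p)` and elimination removes `p` only when some `q` has
`Δ̂(q,p) > c_el·2^{-(m+1)}` with `c_el > c_rad`, then the maximizer `p*` survives
and every survivor is `(c_el + c_rad)·2^{-(m+1)}`-optimal. -/
theorem safe_elimination
    {A : Type*} [Fintype A] [Nonempty A]
    (u : A → ℝ) (pstar : A) (hpstar : ∀ p : A, u p ≤ u pstar)
    (Dhat : A → A → ℝ) (r crad cel : ℝ) (m : ℕ)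
    (hr : 0 ≤ r) (hcrad : 0 ≤ crad) (hcel : crad < cel)
    (hconc : ∀ p q : A, |Dhat q p - (u q - u p)| ≤ r)
    (hrad : r ≤ crad * (2:ℝ) ^ (-(m + 1 : ℤ))) :
    ¬ (∃ q : A, Dhat q pstar > cel * (2:ℝ) ^ (-(m + 1 : ℤ))) ∧
    (∀ p : A, ¬ (∃ q : A, Dhat q p > cel * (2:ℝ) ^ (-(m + 1 : ℤ))) →
      u pstar - u p ≤ (cel + crad) * (2:ℝ) ^ (-(m + 1 : ℤ))) := by
  set ε : ℝ := (2:ℝ) ^ (-(m + 1 : ℤ)) with hε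
  have hεpos : 0 < ε := by positivity
  constructor
  · rintro ⟨q, hq⟩
    have h1 := abs_le.mp (hconc pstar q)
    have h2 : u q - u pstar ≤ 0 := by linarith [hpstar q]
    have : Dhat q pstar ≤ r := by linarith [h1.2]
    have : Dhat q pstar ≤ crad * ε := le_trans this hrad
    nlinarith
  · intro p hp
    have h1 := abs_le.mp (hconc p pstar)
    have h2 : ¬ (Dhat pstar p > cel * ε) := fun h => hp ⟨pstar, h⟩
    push_neg at h2
    have : u pstar - u p ≤ Dhat pstar p + r := by linarith [h1.1]
    nlinarith
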